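/- Let E be a real inner product space, let X ⊆ E be a nonempty convex set, let α > 0 and L > 0 with α ≤ 1/L. Let s : E → ℝ be a convex differentiable function whose gradient ∇s satisfies s(v) ≤ s(u) + ⟪∇s(u), v - u⟫ + (L/2)‖v - u‖² for all u, v ∈ E, and let g : E → ℝ be convex. Let x ∈ X, set y := x - α∇s(x), and let x⁺ ∈ X be a minimizer over X of the map z ↦ g(z) + (1/(2α))‖z - y‖². Then for every z ∈ X, (s + g)(x⁺) - (s + g)(z) ≤ (1/(2α))(‖x - z‖² - ‖x⁺ - z‖²). -/

import Mathlib

open scoped RealInnerProductSpace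

/-- Gradient inequality for a convex differentiable function. -/
lemma grad_ineq_of_convexOn {E : Type*} [NormedAddCommGroup E] [InnerProductSpace ℝ E]
    (s : E → ℝ) (ds : E → E)
    (hs_conv : ConvexOn ℝ Set.univ s)
    (hs_diff : ∀ u : E, HasFDerivAt s (innerSL ℝ (ds u)) u)
    (u v : E) : ⟪ds u, v - u⟫ ≤ s v - s u := by
  set φ : ℝ → ℝ := fun t => s (u + t • (v - u)) with hφ
  have hc : ∀ t : ℝ, HasDerivAt (fun t : ℝ => u + t • (v - u)) (v - u) t := by
    intro t
    simpa using ((hasDerivAt_id t).smul_const (v - u)).const_add u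
  have hder : HasDerivAt φ ⟪ds u, v - u⟫ 0 := by
    have := (hs_diff (u + (0:ℝ) • (v - u))).comp_hasDerivAt 0 (hc 0)
    simp [φ] at this
    exact this
  have hφconv : ConvexOn ℝ Set.univ φ := by
    have := hs_conv.comp_affineMap (AffineMap.lineMap u v : ℝ →ᵃ[ℝ] E)
    have hφeq : φ = s ∘ (AffineMap.lineMap u v : ℝ →ᵃ[ℝ] E) := by
      funext t
      simp [φ, Function.comp, AffineMap.lineMap_apply, vsub_eq_sub, vadd_eq_add, add_comm]
    rw [hφeq]
    exact this
  have hs01 : (0:ℝ) ∈ (Set.univ : Set ℝ) := trivial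
  have := hφconv.le_slope_of_hasDerivAt hs01 (Set.mem_univ (1:ℝ)) one_pos hder
  simpa [slope_def_field, φ] using this

/-- First-order optimality for the prox step. -/
lemma prox_optimality {E : Type*} [NormedAddCommGroup E] [InnerProductSpace ℝ E]
    (X : Set E) (hXconv : Convex ℝ X) (α : ℝ) (hα : 0 < α)
    (g : E → ℝ) (hg_conv : ConvexOn ℝ Set.univ g) (y : E)
    (xp : E) (hxp : xp ∈ X)
    (hxp_min : IsMinOn (fun z => g z + 1 / (2 * α) * ‖z - y‖ ^ 2) X xp)
    (z : E) (hz : z ∈ X) :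
    0 ≤ g z - g xp + (1 / α) * ⟪xp - y, z - xp⟫ := by
  have key : ∀ t : ℝ, 0 < t → t ≤ 1 →
      0 ≤ g z - g xp + (1 / α) * ⟪xp - y, z - xp⟫ + t / (2 * α) * ‖z - xp‖ ^ 2 := by
    intro t ht ht1
    set w : E := xp + t • (z - xp) with hw
    have hcomb : (1 - t) • xp + t • z = xp + t • (z - xp) := by
      rw [smul_sub, sub_smul, one_smul]; abel
    have hwX : w ∈ X := by
      have h := hXconv hxp hz (by linarith : (0:ℝ) ≤ 1 - t) ht.le (by ring)
      rw [hcomb] at h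
      exact h
    have hmin := hxp_min hwX
    simp only [Set.mem_setOf_eq] at hmin
    -- convexity of g
    have hgw : g w ≤ (1 - t) * g xp + t * g z := by
      have := hg_conv.2 (Set.mem_univ xp) (Set.mem_univ z)
        (by linarith : (0:ℝ) ≤ 1 - t) ht.le (by ring)
      rw [hcomb] at this
      simpa [hw, smul_eq_mul] using this
    -- norm expansion
    have hnorm : ‖w - y‖ ^ 2
        = ‖xp - y‖ ^ 2 + 2 * t * ⟪xp - y, z - xp⟫ + t ^ 2 * ‖z - xp‖ ^ 2 := by
      have e : w - y = (xp - y) + t • (z - xp) := by rw [hw]; abel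
      rw [e, norm_add_sq_real, real_inner_smul_right, norm_smul, mul_pow]
      simp [abs_of_pos ht]
      ring
    have h2α : (0:ℝ) < 2 * α := by linarith
    have := hmin
    rw [hnorm] at this
    -- this : g xp + 1/(2α) * ‖xp-y‖^2 ≤ g w + 1/(2α)*(‖xp-y‖^2 + 2t⟪⟫ + t²‖‖²)
    have h1 : 0 ≤ t * (g z - g xp) + 1 / (2 * α) * (2 * t * ⟪xp - y, z - xp⟫
        + t ^ 2 * ‖z - xp‖ ^ 2) := by nlinarith [this, hgw]
    have heq : t * (g z - g xp + (1 / α) * ⟪xp - y, z - xp⟫ + t / (2 * α) * ‖z - xp‖ ^ 2)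
        = t * (g z - g xp) + 1 / (2 * α) * (2 * t * ⟪xp - y, z - xp⟫
          + t ^ 2 * ‖z - xp‖ ^ 2) := by
      field_simp
      ring
    have h2 : 0 ≤ t * (g z - g xp + (1 / α) * ⟪xp - y, z - xp⟫
        + t / (2 * α) * ‖z - xp‖ ^ 2) := by rw [heq]; exact h1
    nlinarith [h2, ht]
  -- limit argument via ε
  by_contra hcon
  push_neg at hcon
  obtain ⟨A, hAdef⟩ : ∃ A, A = g z - g xp + (1 / α) * ⟪xp - y, z - xp⟫ := ⟨_, rfl⟩
  obtain ⟨B, hBdef⟩ : ∃ B, B = 1 / (2 * α) * ‖z - xp‖ ^ 2 := ⟨_, rfl⟩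
  have hA : A < 0 := by rw [hAdef]; exact hcon
  have hB0 : 0 ≤ B := by rw [hBdef]; positivity
  have hApos : 0 < -A := by linarith
  obtain ⟨t, htdef⟩ : ∃ t : ℝ, t = min 1 ((-A) / (2 * (B + 1))) := ⟨_, rfl⟩
  have htpos : 0 < t := by
    rw [htdef]
    apply lt_min one_pos
    positivity
  have ht1 : t ≤ 1 := htdef ▸ min_le_left _ _
  have hkey := key t htpos ht1
  rw [← hAdef] at hkey
  have htB : t * B ≤ (-A) / 2 := by
    have h1 : t ≤ (-A) / (2 * (B + 1)) := htdef ▸ min_le_right _ _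
    calc t * B ≤ ((-A) / (2 * (B + 1))) * B := mul_le_mul_of_nonneg_right h1 hB0
      _ ≤ (-A) / 2 := by
          rw [div_mul_eq_mul_div, div_le_div_iff₀ (by positivity) (by norm_num)]
          nlinarith
  have hrw : t / (2 * α) * ‖z - xp‖ ^ 2 = t * B := by rw [hBdef]; ring
  rw [hrw] at hkey
  linarith

/-- Per-iteration inequality for one constrained proximal-gradient step on a composite
convex function `f = s + g`: for every comparator `z ∈ X`,
`(s + g)(x⁺) - (s + g)(z) ≤ (1/(2α))(‖x - z‖² - ‖x⁺ - z‖²)`. -/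
theorem proximal_gradient_step_inequality
    {E : Type*} [NormedAddCommGroup E] [InnerProductSpace ℝ E]
    (X : Set E) (hXne : X.Nonempty) (hXconv : Convex ℝ X)
    (α L : ℝ) (hα : 0 < α) (hL : 0 < L) (hαL : α ≤ 1 / L)
    (s : E → ℝ) (ds : E → E)
    (hs_conv : ConvexOn ℝ Set.univ s)
    (hs_diff : ∀ u : E, HasFDerivAt s (innerSL ℝ (ds u)) u)
    (hdesc : ∀ u v : E, s v ≤ s u + ⟪ds u, v - u⟫ + L / 2 * ‖v - u‖ ^ 2)
    (g : E → ℝ) (hg_conv : ConvexOn ℝ Set.univ g)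
    (x : E) (hx : x ∈ X) (y : E) (hy : y = x - α • ds x)
    (xp : E) (hxp : xp ∈ X)
    (hxp_min : IsMinOn (fun z => g z + 1 / (2 * α) * ‖z - y‖ ^ 2) X xp) :
    ∀ z ∈ X, (s xp + g xp) - (s z + g z) ≤
      1 / (2 * α) * (‖x - z‖ ^ 2 - ‖xp - z‖ ^ 2) := by
  intro z hz
  have h1 : s xp ≤ s x + ⟪ds x, xp - x⟫ + L / 2 * ‖xp - x‖ ^ 2 := hdesc x xp
  have h2 : ⟪ds x, z - x⟫ ≤ s z - s x := grad_ineq_of_convexOn s ds hs_conv hs_diff x z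
  have h3 : 0 ≤ g z - g xp + (1 / α) * ⟪xp - y, z - xp⟫ :=
    prox_optimality X hXconv α hα g hg_conv y xp hxp hxp_min z hz
  -- expand ⟪xp - y, z - xp⟫
  have hyx : xp - y = (xp - x) + α • ds x := by rw [hy]; abel
  have hinner : ⟪xp - y, z - xp⟫ = ⟪xp - x, z - xp⟫ + α * ⟪ds x, z - xp⟫ := by
    rw [hyx, inner_add_left, real_inner_smul_left]
  -- inner additivity for ds x
  have hsum : ⟪ds x, xp - x⟫ + ⟪ds x, z - xp⟫ = ⟪ds x, z - x⟫ := by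
    rw [← inner_add_right]
    congr 1
    abel
  -- norm identity
  have key : ‖x - z‖ ^ 2 = ‖xp - x‖ ^ 2 + 2 * ⟪xp - x, z - xp⟫ + ‖xp - z‖ ^ 2 := by
    have h := norm_add_sq_real (x - xp) (xp - z)
    have e1 : (x - xp) + (xp - z) = x - z := by abel
    have e2 : ⟪x - xp, xp - z⟫ = ⟪xp - x, z - xp⟫ := by
      rw [show x - xp = -(xp - x) by abel, show xp - z = -(z - xp) by abel, inner_neg_neg]
    have e3 : ‖x - xp‖ = ‖xp - x‖ := norm_sub_rev _ _
    rw [e1, e2, e3] at h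
    linarith
  have hLα : L ≤ 1 / α := by
    rw [le_div_iff₀ hα]
    calc L * α ≤ L * (1 / L) := by nlinarith
      _ = 1 := by field_simp
  -- combine
  have hα' : α ≠ 0 := ne_of_gt hα
  rw [hinner] at h3
  have h3' : 0 ≤ g z - g xp + (1 / α) * ⟪xp - x, z - xp⟫ + ⟪ds x, z - xp⟫ := by
    have heq : (1 / α) * (⟪xp - x, z - xp⟫ + α * ⟪ds x, z - xp⟫)
        = (1 / α) * ⟪xp - x, z - xp⟫ + ⟪ds x, z - xp⟫ := by
      field_simp
    linarith [h3, heq.le, heq.ge]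
  have hfrac : 1 / (2 * α) * (‖x - z‖ ^ 2 - ‖xp - z‖ ^ 2)
      = 1 / (2 * α) * ‖xp - x‖ ^ 2 + (1 / α) * ⟪xp - x, z - xp⟫ := by
    rw [key]
    field_simp
    ring
  have hmain : s xp + g xp - (s z + g z)
      ≤ L / 2 * ‖xp - x‖ ^ 2 + (1 / α) * ⟪xp - x, z - xp⟫ := by linarith
  have hN : L / 2 * ‖xp - x‖ ^ 2 ≤ 1 / (2 * α) * ‖xp - x‖ ^ 2 := by
    apply mul_le_mul_of_nonneg_right _ (sq_nonneg _)
    have : 1 / (2 * α) = (1 / α) / 2 := by ring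
    rw [this]
    linarith
  rw [hfrac]
  linarith
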